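/- If u and v are two words over A_p with val(u) = val(v), then u and v are equal up to leading zeros; i.e., there exists a word w over A_p not starting with 0 (or w = ε) such that u ∈ 0*w and v ∈ 0*w. -/
import Mathlib


/-- Base-p/q evaluation of a word over the digit alphabet, given as a list of
digits with the least-significant digit first:
`pqVal p q [a0, a1, ..., ak] = Σ (a_i / q) * (p/q)^i`. -/
def pqVal (p q : ℕ) : List ℕ → ℚ
  | [] => 0
  | a :: u => (a : ℚ) / q + ((p : ℚ) / q) * pqVal p q u

/-- `N_{p/q}`: the set of values of words over `A_p = {0, ..., p-1}`. -/
def pqSet (p q : ℕ) : Set ℚ :=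
  {x | ∃ u : List ℕ, (∀ a ∈ u, a < p) ∧ pqVal p q u = x}



lemma pqVal_nonneg (p q : ℕ) (u : List ℕ) : 0 ≤ pqVal p q u := by
  induction u with
  | nil => simp [pqVal]
  | cons a u ih =>
    have h1 : (0:ℚ) ≤ (a:ℚ)/q := by positivity
    have h2 : (0:ℚ) ≤ (p:ℚ)/q * pqVal p q u := mul_nonneg (by positivity) ih
    simp only [pqVal]; linarith

lemma pqVal_eq_zero (p q : ℕ) (hp : 0 < p) (hq : 0 < q) (v : List ℕ)
    (h : pqVal p q v = 0) : v = List.replicate v.length 0 := by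
  induction v with
  | nil => simp
  | cons a v ih =>
    have hq0 : (q:ℚ) ≠ 0 := by positivity
    have hp0 : (p:ℚ) ≠ 0 := by positivity
    simp only [pqVal] at h
    have h1 : (0:ℚ) ≤ (a:ℚ)/q := by positivity
    have h2 : (0:ℚ) ≤ (p:ℚ)/q * pqVal p q v := mul_nonneg (by positivity) (pqVal_nonneg p q v)
    have ha : (a:ℚ)/q = 0 := by linarith
    have hx : (p:ℚ)/q * pqVal p q v = 0 := by linarith
    have ha' : a = 0 := by
      have := (div_eq_zero_iff.mp ha).resolve_right hq0
      exact_mod_cast this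
    have hx' : pqVal p q v = 0 := by
      rcases mul_eq_zero.mp hx with h' | h'
      · exact absurd ((div_eq_zero_iff.mp h').resolve_right hq0) hp0
      · exact h'
    rw [ha', List.length_cons, List.replicate_succ]
    exact congrArg _ (ih hx')

lemma pqVal_int (p q : ℕ) (hq : 0 < q) (u : List ℕ) :
    ∃ n : ℤ, (q:ℚ)^u.length * pqVal p q u = n := by
  induction u with
  | nil => exact ⟨0, by simp [pqVal]⟩
  | cons a u ih =>
    obtain ⟨n, hn⟩ := ih
    have hq0 : (q:ℚ) ≠ 0 := by positivity
    refine ⟨a * q^u.length + p * n, ?_⟩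
    push_cast
    rw [← hn]
    simp only [pqVal, List.length_cons]
    field_simp
    ring

/-- words with equal value are equal up to leading zeros.  In the
least-significant-first encoding, leading zeros are trailing entries of the
list, and "w does not start with 0" means the last entry of the list is
nonzero. -/
theorem stmt_2 (p q : ℕ) (hq : 1 < q) (hpq : q < p) (hcop : Nat.Coprime p q)
    (u v : List ℕ) (hu : ∀ a ∈ u, a < p) (hv : ∀ a ∈ v, a < p)
    (h : pqVal p q u = pqVal p q v) :
    ∃ w : List ℕ, (∀ a ∈ w, a < p) ∧ (w = [] ∨ w.getLast? ≠ some 0) ∧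
      (∃ j : ℕ, u = w ++ List.replicate j 0) ∧
      (∃ k : ℕ, v = w ++ List.replicate k 0) := by
  have hp : 0 < p := lt_trans (by omega) hpq
  have hq' : 0 < q := by omega
  induction u generalizing v with
  | nil =>
    have hv0 : v = List.replicate v.length 0 :=
      pqVal_eq_zero p q hp hq' v (by simpa [pqVal] using h.symm)
    exact ⟨[], by simp, Or.inl rfl, ⟨0, by simp⟩, ⟨v.length, by simpa using hv0⟩⟩
  | cons a u' ih =>
    cases v with
    | nil =>
      have hu0 : a :: u' = List.replicate (a :: u').length 0 :=
        pqVal_eq_zero p q hp hq' _ (by simpa [pqVal] using h)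
      exact ⟨[], by simp, Or.inl rfl, ⟨(a :: u').length, by simpa using hu0⟩, ⟨0, by simp⟩⟩
    | cons b v' =>
      have hq0 : (q:ℚ) ≠ 0 := by positivity
      have hp0 : (p:ℚ) ≠ 0 := by positivity
      simp only [pqVal] at h
      set X := pqVal p q u' with hX
      set Y := pqVal p q v' with hY
      have h1 : (a:ℚ) + p * X = b + p * Y := by
        field_simp at h
        linarith
      obtain ⟨n, hn⟩ := pqVal_int p q hq' u'
      obtain ⟨m, hm⟩ := pqVal_int p q hq' v'
      rw [← hX] at hn
      rw [← hY] at hm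
      set s := u'.length
      set t := v'.length
      have key : ((a:ℚ) - b) * ((q:ℚ)^s * (q:ℚ)^t) = p * (m * q^s - n * q^t) := by
        linear_combination (q:ℚ)^s * (q:ℚ)^t * h1 + (p:ℚ) * (q:ℚ)^s * hm - (p:ℚ) * (q:ℚ)^t * hn
      have keyZ : ((a:ℤ) - b) * ((q:ℤ)^s * (q:ℤ)^t) = p * (m * q^s - n * q^t) := by
        exact_mod_cast key
      have hdvd : (p:ℤ) ∣ ((a:ℤ) - b) * ((q:ℤ)^s * (q:ℤ)^t) := ⟨_, keyZ⟩
      have hcop' : IsCoprime ((p:ℤ)) ((q:ℤ)^s * (q:ℤ)^t) :=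
        ((Int.isCoprime_iff_gcd_eq_one.mpr (by simpa using hcop)).pow_right).mul_right
          (Int.isCoprime_iff_gcd_eq_one.mpr (by simpa using hcop)).pow_right
      have hdvd' : (p:ℤ) ∣ (a:ℤ) - b := hcop'.dvd_of_dvd_mul_right hdvd
      have hap : a < p := hu a (by simp)
      have hbp : b < p := hv b (by simp)
      have hab : a = b := by
        have h0 : ((a:ℤ) - b) = 0 := Int.eq_zero_of_abs_lt_dvd hdvd' (by
          rw [abs_lt]; constructor <;> omega)
        omega
      have hXY : X = Y := by
        have : (p:ℚ) * X = (p:ℚ) * Y := by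
          rw [hab] at h1; linarith
        exact mul_left_cancel₀ hp0 this
      obtain ⟨w, hw, hlast, ⟨j, hj⟩, ⟨k, hk⟩⟩ :=
        ih v' (fun x hx => hu x (List.mem_cons_of_mem _ hx))
          (fun x hx => hv x (List.mem_cons_of_mem _ hx)) hXY
      cases w with
      | nil =>
        simp only [List.nil_append] at hj hk
        by_cases ha : a = 0
        · exact ⟨[], by simp, Or.inl rfl,
            ⟨j + 1, by simp [hj, ha, List.replicate_succ]⟩,
            ⟨k + 1, by simp [hk, hab ▸ ha, List.replicate_succ]⟩⟩
        · exact ⟨[a], by simpa using hap, Or.inr (by simp [ha]),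
            ⟨j, by simp [hj]⟩, ⟨k, by simp [hk, hab]⟩⟩
      | cons c w' =>
        refine ⟨a :: c :: w', ?_, Or.inr ?_, ⟨j, by simp [hj]⟩, ⟨k, by simp [hk, hab]⟩⟩
        · intro x hx
          rcases List.mem_cons.mp hx with rfl | hx'
          · exact hap
          · exact hw x hx'
        · rw [List.getLast?_cons_cons]
          exact hlast.resolve_left (by simp)
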